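/- Let h₀ > 0 and let f₀, λ, c, c₁, c₀ be real numbers satisfying c² = λ + f₀·c₁. Define F(x) := −(4c/√h₀)·x^(1/2) + (f₀/h₀)·ln x + c₁·x + c₀ for x > 0. Then F″(x) = (c/√h₀)·x^(−3/2) − (f₀/h₀)·x^(−2) and h₀·x³·(F″(x))² = λ + f₀·F′(x) for all x > 0. -/

import Mathlib

theorem stmt_7 (h₀ f₀ lam c c₁ c₀ : ℝ) (hh₀ : 0 < h₀)
    (hc : c ^ 2 = lam + f₀ * c₁)
    (F : ℝ → ℝ)
    (hF : ∀ x : ℝ, 0 < x →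
      F x = -(4 * c / Real.sqrt h₀) * x ^ ((1 : ℝ) / 2) + (f₀ / h₀) * Real.log x
        + c₁ * x + c₀) :
    ∀ x : ℝ, 0 < x →
      deriv (deriv F) x = (c / Real.sqrt h₀) * x ^ (-(3 : ℝ) / 2)
          - (f₀ / h₀) * x ^ (-(2 : ℝ)) ∧
      h₀ * x ^ 3 * (deriv (deriv F) x) ^ 2 = lam + f₀ * deriv F x := by
  set s := Real.sqrt h₀ with hs_def
  have hs : 0 < s := Real.sqrt_pos.mpr hh₀
  have hs2 : s ^ 2 = h₀ := Real.sq_sqrt hh₀.le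
  -- first derivative
  have hd1 : ∀ x : ℝ, 0 < x →
      HasDerivAt F (-(2 * c / s) * x ^ (-(1:ℝ)/2) + (f₀ / h₀) * x⁻¹ + c₁) x := by
    intro x hx
    have hne : x ≠ 0 := ne_of_gt hx
    have h1 : HasDerivAt (fun y : ℝ => y ^ ((1:ℝ)/2)) (((1:ℝ)/2) * x ^ ((1:ℝ)/2 - 1)) x :=
      Real.hasDerivAt_rpow_const (Or.inl hne)
    have h2 : HasDerivAt Real.log x⁻¹ x := Real.hasDerivAt_log hne
    have h3 := (((h1.const_mul (-(4 * c / s))).add (h2.const_mul (f₀ / h₀))).add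
      ((hasDerivAt_id x).const_mul c₁)).add_const c₀
    have heq : F =ᶠ[nhds x]
        fun y => -(4 * c / s) * y ^ ((1:ℝ)/2) + (f₀ / h₀) * Real.log y + c₁ * y + c₀ := by
      filter_upwards [isOpen_Ioi.mem_nhds (show x ∈ Set.Ioi (0:ℝ) from hx)] with y hy
      exact hF y hy
    have h4 := h3.congr_of_eventuallyEq heq
    refine h4.congr_deriv ?_
    have : (1:ℝ)/2 - 1 = -(1:ℝ)/2 := by norm_num
    rw [this]; ring
  have hdF : ∀ x : ℝ, 0 < x →
      deriv F x = -(2 * c / s) * x ^ (-(1:ℝ)/2) + (f₀ / h₀) * x⁻¹ + c₁ := fun x hx =>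
    (hd1 x hx).deriv
  -- second derivative
  have hd2 : ∀ x : ℝ, 0 < x →
      HasDerivAt (deriv F) ((c / s) * x ^ (-(3:ℝ)/2) - (f₀ / h₀) * x ^ (-(2:ℝ))) x := by
    intro x hx
    have hne : x ≠ 0 := ne_of_gt hx
    have h1 : HasDerivAt (fun y : ℝ => y ^ (-(1:ℝ)/2)) ((-(1:ℝ)/2) * x ^ (-(1:ℝ)/2 - 1)) x :=
      Real.hasDerivAt_rpow_const (Or.inl hne)
    have h2 : HasDerivAt (fun y : ℝ => y⁻¹) (-(x ^ 2)⁻¹) x := hasDerivAt_inv hne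
    have h3 := ((h1.const_mul (-(2 * c / s))).add (h2.const_mul (f₀ / h₀))).add_const c₁
    have heq : deriv F =ᶠ[nhds x]
        fun y => -(2 * c / s) * y ^ (-(1:ℝ)/2) + (f₀ / h₀) * y⁻¹ + c₁ := by
      filter_upwards [isOpen_Ioi.mem_nhds (show x ∈ Set.Ioi (0:ℝ) from hx)] with y hy
      exact hdF y hy
    have h4 := h3.congr_of_eventuallyEq heq
    refine h4.congr_deriv ?_
    have e1 : -(1:ℝ)/2 - 1 = -(3:ℝ)/2 := by norm_num
    have e2 : x ^ (-(2:ℝ)) = (x ^ 2)⁻¹ := by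
      rw [Real.rpow_neg hx.le, Real.rpow_two]
    rw [e1, e2]; ring
  intro x hx
  have hne : x ≠ 0 := ne_of_gt hx
  have hD2 : deriv (deriv F) x = (c / s) * x ^ (-(3:ℝ)/2) - (f₀ / h₀) * x ^ (-(2:ℝ)) :=
    (hd2 x hx).deriv
  refine ⟨hD2, ?_⟩
  rw [hD2, hdF x hx]
  set A := x ^ (-(3:ℝ)/2) with hA
  set B := x ^ (-(2:ℝ)) with hB
  set X := x ^ (-(1:ℝ)/2) with hX
  have m1 : x ^ 3 * A ^ 2 = 1 := by
    rw [hA, ← Real.rpow_natCast x 3, ← Real.rpow_natCast (x ^ (-(3:ℝ)/2)) 2,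
      ← Real.rpow_mul hx.le, ← Real.rpow_add hx]
    norm_num
  have m2 : x ^ 3 * (A * B) = X := by
    rw [hA, hB, hX, ← Real.rpow_natCast x 3, ← Real.rpow_add hx, ← Real.rpow_add hx]
    norm_num
  have m3 : x ^ 3 * B ^ 2 = x⁻¹ := by
    rw [hB, ← Real.rpow_natCast x 3, ← Real.rpow_natCast (x ^ (-(2:ℝ))) 2,
      ← Real.rpow_mul hx.le, ← Real.rpow_add hx]
    rw [show ((3:ℕ):ℝ) + -(2:ℝ) * (2:ℕ) = -1 by push_cast; ring, Real.rpow_neg_one]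
  have expand : h₀ * x ^ 3 * ((c / s) * A - (f₀ / h₀) * B) ^ 2
      = h₀ * ((c / s) ^ 2 * (x ^ 3 * A ^ 2)
          - 2 * ((c / s) * (f₀ / h₀)) * (x ^ 3 * (A * B))
          + (f₀ / h₀) ^ 2 * (x ^ 3 * B ^ 2)) := by ring
  rw [expand, m1, m2, m3, ← hs2]
  have hh₀' : s ^ 2 ≠ 0 := by positivity
  field_simp
  linear_combination s ^ 2 * x * hc
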